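/- Let (D(E)) be a self-adjoint matrix convex set with D(E) ⊆ A ⊗ B(E) for a Banach space A, and let F : D(E) → B(E) be a free function. Then F is operator concave (F((1-λ)X + λY) ≥ (1-λ)F(X) + λF(Y) for X, Y ∈ D(E), λ ∈ [0,1]) if and only if for each isometry W : E → K between Hilbert spaces and each X ∈ D(K), F((I_A ⊗ W*)X(I_A ⊗ W)) ≥ W*F(X)W. -/

import Mathlib

open Matrix
open scoped ComplexOrder

abbrev Mat (d : ℕ) := Matrix (Fin d) (Fin d) ℂ

/-- Loewner order: `A ≤ B` iff `B - A` is positive semi-definite. -/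
def Loewner {d : ℕ} (A B : Mat d) : Prop := (B - A).PosSemidef

/-- Direct sum of square matrices, realized on `Fin (d + d')`. -/
def dsumM {d d' : ℕ} (X : Mat d) (Y : Mat d') : Mat (d + d') :=
  Matrix.reindex finSumFinEquiv finSumFinEquiv (Matrix.fromBlocks X 0 0 Y)

/-- A graded family of sets of `k`-tuples of matrices (the case `𝒜 = ℂᵏ`,
finite-dimensional `E`) is a self-adjoint matrix convex set: closed under
unitary conjugation, direct sums, isometric conjugation and the adjoint. -/
structure IsSAMatrixConvex (k : ℕ) (D : ∀ d : ℕ, Set (Fin k → Mat d)) : Prop where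
  unitary : ∀ (d : ℕ) (U : Mat d), U ∈ Matrix.unitaryGroup (Fin d) ℂ →
    ∀ X ∈ D d, (fun i => Uᴴ * X i * U) ∈ D d
  dsum : ∀ (d d' : ℕ), ∀ X ∈ D d, ∀ Y ∈ D d',
    (fun i => dsumM (X i) (Y i)) ∈ D (d + d')
  isom : ∀ (d d' : ℕ) (V : Matrix (Fin d') (Fin d) ℂ), Vᴴ * V = 1 →
    ∀ X ∈ D d', (fun i => Vᴴ * X i * V) ∈ D d
  selfAdj : ∀ (d : ℕ), ∀ X ∈ D d, (fun i => (X i)ᴴ) ∈ D d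

/-- A graded family of functions is a free function on the domain `D`:
it preserves unitary conjugation and direct sums. -/
structure IsFreeFn (k : ℕ) (D : ∀ d : ℕ, Set (Fin k → Mat d))
    (F : ∀ d : ℕ, (Fin k → Mat d) → Mat d) : Prop where
  unitary : ∀ (d : ℕ) (U : Mat d), U ∈ Matrix.unitaryGroup (Fin d) ℂ →
    ∀ X ∈ D d, F d (fun i => Uᴴ * X i * U) = Uᴴ * F d X * U
  dsum : ∀ (d d' : ℕ), ∀ X ∈ D d, ∀ Y ∈ D d',
    F (d + d') (fun i => dsumM (X i) (Y i)) = dsumM (F d X) (F d' Y)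

/-- Operator concavity of a free function on `D`. -/
def IsOpConcave (k : ℕ) (D : ∀ d : ℕ, Set (Fin k → Mat d))
    (F : ∀ d : ℕ, (Fin k → Mat d) → Mat d) : Prop :=
  ∀ (d : ℕ), ∀ X ∈ D d, ∀ Y ∈ D d, ∀ t : ℝ, 0 ≤ t → t ≤ 1 →
    Loewner (((1 - t : ℝ) : ℂ) • F d X + (t : ℂ) • F d Y)
      (F d (fun i => ((1 - t : ℝ) : ℂ) • X i + (t : ℂ) • Y i))

section Helpers

variable {d d' m m' : ℕ}

/-- Inclusion of the first summand `ℂᵈ → ℂᵈ ⊕ ℂᵈ'`, as a matrix. -/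
def J1 (d d' : ℕ) : Matrix (Fin (d + d')) (Fin d) ℂ :=
  (Matrix.fromRows (1 : Mat d) (0 : Matrix (Fin d') (Fin d) ℂ)).submatrix
    (⇑(finSumFinEquiv (m := d) (n := d')).symm) id

/-- Inclusion of the second summand `ℂᵈ' → ℂᵈ ⊕ ℂᵈ'`, as a matrix. -/
def J2 (d d' : ℕ) : Matrix (Fin (d + d')) (Fin d') ℂ :=
  (Matrix.fromRows (0 : Matrix (Fin d) (Fin d') ℂ) (1 : Mat d')).submatrix
    (⇑(finSumFinEquiv (m := d) (n := d')).symm) id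

lemma dsumM_eq (X : Mat d) (Y : Mat d') :
    dsumM X Y = (Matrix.fromBlocks X 0 0 Y).submatrix
      (⇑(finSumFinEquiv (m := d) (n := d')).symm) (⇑(finSumFinEquiv (m := d) (n := d')).symm) := by
  rw [dsumM, reindex_apply]

lemma submul_right (A : Matrix (Fin d ⊕ Fin d') (Fin m) ℂ) (B : Matrix (Fin m) (Fin m') ℂ) :
    A.submatrix (⇑(finSumFinEquiv (m := d) (n := d')).symm) id * B
      = (A * B).submatrix (⇑(finSumFinEquiv (m := d) (n := d')).symm) id := by
  ext i j; simp [Matrix.mul_apply]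

lemma dsumM_conjT (X : Mat d) (Y : Mat d') : (dsumM X Y)ᴴ = dsumM Xᴴ Yᴴ := by
  rw [dsumM_eq, dsumM_eq, conjTranspose_submatrix, fromBlocks_conjTranspose]
  simp

lemma dsumM_mul (X Z : Mat d) (Y W : Mat d') : dsumM X Y * dsumM Z W = dsumM (X * Z) (Y * W) := by
  rw [dsumM_eq, dsumM_eq, dsumM_eq, submatrix_mul_equiv, fromBlocks_multiply]
  simp

lemma dsumM_one : dsumM (1 : Mat d) (1 : Mat d') = 1 := by
  rw [dsumM_eq, fromBlocks_one, submatrix_one_equiv]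

lemma J1_conjT : (J1 d d')ᴴ
    = (Matrix.fromCols (1 : Mat d) (0 : Matrix (Fin d) (Fin d') ℂ)).submatrix
        id (⇑(finSumFinEquiv (m := d) (n := d')).symm) := by
  rw [J1, conjTranspose_submatrix, conjTranspose_fromRows_eq_fromCols_conjTranspose]
  simp

lemma J2_conjT : (J2 d d')ᴴ
    = (Matrix.fromCols (0 : Matrix (Fin d') (Fin d) ℂ) (1 : Mat d')).submatrix
        id (⇑(finSumFinEquiv (m := d) (n := d')).symm) := by
  rw [J2, conjTranspose_submatrix, conjTranspose_fromRows_eq_fromCols_conjTranspose]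
  simp

lemma J1tJ1 : (J1 d d')ᴴ * J1 d d' = 1 := by
  rw [J1_conjT, J1, submatrix_mul_equiv, fromCols_mul_fromRows]
  simp

lemma J2tJ2 : (J2 d d')ᴴ * J2 d d' = 1 := by
  rw [J2_conjT, J2, submatrix_mul_equiv, fromCols_mul_fromRows]
  simp

lemma J1tJ2 : (J1 d d')ᴴ * J2 d d' = 0 := by
  rw [J1_conjT, J2, submatrix_mul_equiv, fromCols_mul_fromRows]
  simp

lemma J2tJ1 : (J2 d d')ᴴ * J1 d d' = 0 := by
  rw [J2_conjT, J1, submatrix_mul_equiv, fromCols_mul_fromRows]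
  simp

lemma dsumM_mul_J1 (X : Mat d) (Y : Mat d') : dsumM X Y * J1 d d' = J1 d d' * X := by
  rw [dsumM_eq, J1, submatrix_mul_equiv, fromBlocks_mul_fromRows, submul_right, fromRows_mul]
  simp

lemma dsumM_mul_J2 (X : Mat d) (Y : Mat d') : dsumM X Y * J2 d d' = J2 d d' * Y := by
  rw [dsumM_eq, J2, submatrix_mul_equiv, fromBlocks_mul_fromRows, submul_right, fromRows_mul]
  simp

lemma J1t_mul_dsumM (X : Mat d) (Y : Mat d') : (J1 d d')ᴴ * dsumM X Y = X * (J1 d d')ᴴ := by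
  have h := congrArg conjTranspose (dsumM_mul_J1 Xᴴ Yᴴ)
  simpa [conjTranspose_mul, dsumM_conjT] using h

lemma J2t_mul_dsumM (X : Mat d) (Y : Mat d') : (J2 d d')ᴴ * dsumM X Y = Y * (J2 d d')ᴴ := by
  have h := congrArg conjTranspose (dsumM_mul_J2 Xᴴ Yᴴ)
  simpa [conjTranspose_mul, dsumM_conjT] using h

lemma compress_J1 (X : Mat d) (Y : Mat d') : (J1 d d')ᴴ * dsumM X Y * J1 d d' = X := by
  rw [Matrix.mul_assoc, dsumM_mul_J1, ← Matrix.mul_assoc, J1tJ1, Matrix.one_mul]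

lemma compress_J2 (X : Mat d) (Y : Mat d') : (J2 d d')ᴴ * dsumM X Y * J2 d d' = Y := by
  rw [Matrix.mul_assoc, dsumM_mul_J2, ← Matrix.mul_assoc, J2tJ2, Matrix.one_mul]

lemma self_sub (M : Mat (d + d')) :
    M = (M.submatrix (⇑(finSumFinEquiv (m := d) (n := d'))) (⇑finSumFinEquiv)).submatrix
      (⇑(finSumFinEquiv (m := d) (n := d')).symm) (⇑finSumFinEquiv.symm) := by
  simp [Matrix.submatrix_submatrix]

lemma compress1 (M : Mat (d + d')) :
    (J1 d d')ᴴ * M * J1 d d'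
      = (M.submatrix (⇑(finSumFinEquiv (m := d) (n := d'))) (⇑finSumFinEquiv)).toBlocks₁₁ := by
  conv_lhs => rw [self_sub M]
  set A := M.submatrix (⇑(finSumFinEquiv (m := d) (n := d'))) (⇑finSumFinEquiv) with hA
  rw [J1_conjT, J1, submatrix_mul_equiv, submatrix_mul_equiv, submatrix_id_id,
    ← fromBlocks_toBlocks A, fromCols_mul_fromBlocks, fromCols_mul_fromRows]
  simp

lemma compress2 (M : Mat (d + d')) :
    (J2 d d')ᴴ * M * J2 d d'
      = (M.submatrix (⇑(finSumFinEquiv (m := d) (n := d'))) (⇑finSumFinEquiv)).toBlocks₂₂ := by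
  conv_lhs => rw [self_sub M]
  set A := M.submatrix (⇑(finSumFinEquiv (m := d) (n := d'))) (⇑finSumFinEquiv) with hA
  rw [J2_conjT, J2, submatrix_mul_equiv, submatrix_mul_equiv, submatrix_id_id,
    ← fromBlocks_toBlocks A, fromCols_mul_fromBlocks, fromCols_mul_fromRows]
  simp

lemma sdsum_her : (dsumM (1 : Mat d) (-1 : Mat d'))ᴴ = dsumM 1 (-1) := by
  rw [dsumM_conjT]; simp

lemma sdsum_unitary : dsumM (1 : Mat d) (-1 : Mat d') ∈ Matrix.unitaryGroup (Fin (d + d')) ℂ := by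
  rw [Matrix.mem_unitaryGroup_iff, Matrix.star_eq_conjTranspose, sdsum_her, dsumM_mul]
  simpa using dsumM_one

lemma sum_world (A : Matrix (Fin d ⊕ Fin d') (Fin d ⊕ Fin d') ℂ) :
    (1/2 : ℂ) • A + (1/2 : ℂ) • (Matrix.fromBlocks (1 : Mat d) 0 0 (-1 : Mat d') * A
        * Matrix.fromBlocks (1 : Mat d) 0 0 (-1 : Mat d'))
      = Matrix.fromBlocks A.toBlocks₁₁ 0 0 A.toBlocks₂₂ := by
  have h : A = fromBlocks A.toBlocks₁₁ A.toBlocks₁₂ A.toBlocks₂₁ A.toBlocks₂₂ :=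
    (fromBlocks_toBlocks A).symm
  conv_lhs => rw [h]
  rw [fromBlocks_multiply, fromBlocks_multiply, fromBlocks_smul, fromBlocks_smul, fromBlocks_add,
    fromBlocks_inj]
  refine ⟨?_, ?_, ?_, ?_⟩ <;> simp <;> module

lemma halfsum (M : Mat (d + d')) :
    (1/2 : ℂ) • M + (1/2 : ℂ) • ((dsumM (1 : Mat d) (-1 : Mat d'))ᴴ * M
        * dsumM (1 : Mat d) (-1 : Mat d'))
      = dsumM ((J1 d d')ᴴ * M * J1 d d') ((J2 d d')ᴴ * M * J2 d d') := by
  rw [sdsum_her, compress1, compress2]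
  conv_lhs => rw [self_sub M]
  set A := M.submatrix (⇑(finSumFinEquiv (m := d) (n := d'))) (⇑finSumFinEquiv) with hA
  rw [dsumM_eq (X := (1 : Mat d)), dsumM_eq (X := A.toBlocks₁₁), submatrix_mul_equiv,
    submatrix_mul_equiv, ← sum_world A]
  simp [Matrix.submatrix_add, Matrix.submatrix_smul]

/-- Conjugation by a product, rebracketed. -/
lemma sandwich {a b c : ℕ} (A : Mat a) (P : Matrix (Fin a) (Fin b) ℂ)
    (Q : Matrix (Fin b) (Fin c) ℂ) :
    (P * Q)ᴴ * A * (P * Q) = Qᴴ * (Pᴴ * A * P) * Q := by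
  simp only [Matrix.conjTranspose_mul, Matrix.mul_assoc]

/-- The self-adjoint unitary completing the isometry `W` on `ℂᵈ ⊕ ℂᵈ'`. -/
noncomputable def UW {d d' : ℕ} (W : Matrix (Fin d') (Fin d) ℂ) : Mat (d + d') :=
  (Matrix.fromBlocks (0 : Mat d) Wᴴ W ((1 : Mat d') - W * Wᴴ)).submatrix
    (⇑(finSumFinEquiv (m := d) (n := d')).symm) (⇑finSumFinEquiv.symm)

lemma UW_her (W : Matrix (Fin d') (Fin d) ℂ) : (UW W)ᴴ = UW W := by
  rw [UW, conjTranspose_submatrix, fromBlocks_conjTranspose]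
  simp [Matrix.conjTranspose_sub, Matrix.conjTranspose_mul]

lemma UW_mul_self {W : Matrix (Fin d') (Fin d) ℂ} (hW : Wᴴ * W = 1) : UW W * UW W = 1 := by
  have h1 : Wᴴ * ((1 : Mat d') - W * Wᴴ) = 0 := by
    rw [Matrix.mul_sub, Matrix.mul_one, ← Matrix.mul_assoc, hW, Matrix.one_mul, sub_self]
  have h2 : ((1 : Mat d') - W * Wᴴ) * W = 0 := by
    rw [Matrix.sub_mul, Matrix.one_mul, Matrix.mul_assoc, hW, Matrix.mul_one, sub_self]
  have hP : (W * Wᴴ) * (W * Wᴴ) = W * Wᴴ := by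
    calc (W * Wᴴ) * (W * Wᴴ) = W * (Wᴴ * W) * Wᴴ := by simp [Matrix.mul_assoc]
    _ = W * Wᴴ := by rw [hW, Matrix.mul_one]
  have h3 : W * Wᴴ + ((1 : Mat d') - W * Wᴴ) * ((1 : Mat d') - W * Wᴴ) = 1 := by
    rw [show ((1 : Mat d') - W * Wᴴ) * ((1 : Mat d') - W * Wᴴ)
        = 1 - W * Wᴴ - W * Wᴴ + (W * Wᴴ) * (W * Wᴴ) from by noncomm_ring, hP]
    abel
  rw [UW, submatrix_mul_equiv, fromBlocks_multiply]
  rw [show (0 : Mat d) * 0 + Wᴴ * W = 1 from by rw [hW]; simp,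
    show (0 : Mat d) * Wᴴ + Wᴴ * ((1 : Mat d') - W * Wᴴ) = 0 from by rw [h1]; simp,
    show W * (0 : Mat d) + ((1 : Mat d') - W * Wᴴ) * W = 0 from by rw [h2]; simp,
    show W * Wᴴ + ((1 : Mat d') - W * Wᴴ) * ((1 : Mat d') - W * Wᴴ) = 1 from h3,
    fromBlocks_one, submatrix_one_equiv]

lemma UW_unitary {W : Matrix (Fin d') (Fin d) ℂ} (hW : Wᴴ * W = 1) :
    UW W ∈ Matrix.unitaryGroup (Fin (d + d')) ℂ := by
  rw [Matrix.mem_unitaryGroup_iff, Matrix.star_eq_conjTranspose, UW_her, UW_mul_self hW]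

lemma UW_mul_J1 (W : Matrix (Fin d') (Fin d) ℂ) : UW W * J1 d d' = J2 d d' * W := by
  rw [UW, J1, submatrix_mul_equiv, fromBlocks_mul_fromRows, J2, submul_right, fromRows_mul]
  simp

lemma conj_compress (W : Matrix (Fin d') (Fin d) ℂ) (A : Mat d) (B : Mat d') :
    (J1 d d')ᴴ * ((UW W)ᴴ * dsumM A B * UW W) * J1 d d' = Wᴴ * B * W := by
  rw [← sandwich, UW_mul_J1, sandwich, compress_J2]

lemma conj_S_J1 (A : Mat (d + d')) :
    (J1 d d')ᴴ * ((dsumM (1 : Mat d) (-1 : Mat d'))ᴴ * A * dsumM (1 : Mat d) (-1 : Mat d'))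
        * J1 d d'
      = (J1 d d')ᴴ * A * J1 d d' := by
  rw [← sandwich, dsumM_mul_J1, Matrix.mul_one]

end Helpers

/-- a free function `F` on a self-adjoint matrix convex domain
`(D(E))` is operator concave if and only if for every isometry `W : E → K` and
every `X ∈ D(K)` one has `F(Wᴴ X W) ≥ Wᴴ F(X) W`. -/
theorem stmt11 (k : ℕ) (D : ∀ d : ℕ, Set (Fin k → Mat d))
    (F : ∀ d : ℕ, (Fin k → Mat d) → Mat d)
    (hD : IsSAMatrixConvex k D) (hF : IsFreeFn k D F) :
    IsOpConcave k D F ↔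
      ∀ (d d' : ℕ) (W : Matrix (Fin d') (Fin d) ℂ), Wᴴ * W = 1 →
        ∀ X ∈ D d', Loewner (Wᴴ * F d' X * W) (F d (fun i => Wᴴ * X i * W)) := by
  constructor
  · -- operator concave → isometric compressions decrease F
    intro hconc d d' W hW X hX
    have hY : (fun i => Wᴴ * X i * W) ∈ D d := hD.isom d d' W hW X hX
    set Y : Fin k → Mat d := fun i => Wᴴ * X i * W with hYdef
    have hZ : (fun i => dsumM (Y i) (X i)) ∈ D (d + d') := hD.dsum d d' Y hY X hX
    set Z : Fin k → Mat (d + d') := fun i => dsumM (Y i) (X i) with hZdef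
    have hUu := UW_unitary hW
    have hZ2 : (fun i => (UW W)ᴴ * Z i * UW W) ∈ D (d + d') :=
      hD.unitary (d + d') (UW W) hUu Z hZ
    set Z2 : Fin k → Mat (d + d') := fun i => (UW W)ᴴ * Z i * UW W with hZ2def
    have hSu := sdsum_unitary (d := d) (d' := d')
    set S : Mat (d + d') := dsumM (1 : Mat d) (-1 : Mat d') with hSdef
    have hZ3 : (fun i => Sᴴ * Z2 i * S) ∈ D (d + d') :=
      hD.unitary (d + d') S hSu Z2 hZ2
    have hmid := hconc (d + d') Z2 hZ2 (fun i => Sᴴ * Z2 i * S) hZ3 (1/2)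
      (by norm_num) (by norm_num)
    beta_reduce at hmid
    have hc : ((1 - (1/2 : ℝ) : ℝ) : ℂ) = (1/2 : ℂ) := by norm_num
    have hc2 : (((1/2 : ℝ)) : ℂ) = (1/2 : ℂ) := by norm_num
    rw [hc, hc2] at hmid
    -- identify the midpoint as a direct sum
    have hY2 : (fun i => (J2 d d')ᴴ * Z2 i * J2 d d') ∈ D d' :=
      hD.isom d' (d + d') (J2 d d') J2tJ2 Z2 hZ2
    set Y2 : Fin k → Mat d' := fun i => (J2 d d')ᴴ * Z2 i * J2 d d' with hY2def
    have hcomp1 : ∀ i, (J1 d d')ᴴ * Z2 i * J1 d d' = Y i := by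
      intro i
      rw [hZ2def, hZdef]
      exact conj_compress W (Y i) (X i)
    have hfun : (fun i => (1/2 : ℂ) • Z2 i + (1/2 : ℂ) • (Sᴴ * Z2 i * S))
        = fun i => dsumM (Y i) (Y2 i) := by
      funext i
      rw [hSdef, halfsum (Z2 i), hcomp1 i, hY2def]
    rw [hfun, hF.dsum d d' Y hY Y2 hY2] at hmid
    have hFZ2 : F (d + d') Z2 = (UW W)ᴴ * F (d + d') Z * UW W := by
      rw [hZ2def]; exact hF.unitary (d + d') (UW W) hUu Z hZ
    have hFZ3 : F (d + d') (fun i => Sᴴ * Z2 i * S) = Sᴴ * F (d + d') Z2 * S :=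
      hF.unitary (d + d') S hSu Z2 hZ2
    have hFZ : F (d + d') Z = dsumM (F d Y) (F d' X) := by
      rw [hZdef]; exact hF.dsum d d' Y hY X hX
    rw [hFZ3] at hmid
    -- compress the Loewner inequality by J1
    unfold Loewner at hmid ⊢
    have hps := hmid.conjTranspose_mul_mul_same (J1 d d')
    have key : (J1 d d')ᴴ * (dsumM (F d Y) (F d' Y2)
          - ((1/2 : ℂ) • F (d + d') Z2 + (1/2 : ℂ) • (Sᴴ * F (d + d') Z2 * S))) * J1 d d'
        = F d Y - Wᴴ * F d' X * W := by
      have c1 : (J1 d d')ᴴ * F (d + d') Z2 * J1 d d' = Wᴴ * F d' X * W := by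
        rw [hFZ2, hFZ]; exact conj_compress W (F d Y) (F d' X)
      have c2 : (J1 d d')ᴴ * (Sᴴ * F (d + d') Z2 * S) * J1 d d' = Wᴴ * F d' X * W := by
        rw [hSdef, conj_S_J1, c1]
      rw [Matrix.mul_sub, Matrix.sub_mul, compress_J1, Matrix.mul_add, Matrix.add_mul,
        Matrix.mul_smul, Matrix.smul_mul, Matrix.mul_smul, Matrix.smul_mul, c1, c2]
      module
    rw [key] at hps
    exact hps
  · -- the compression inequality → operator concavity
    intro h d X hX Y hY t ht0 ht1
    set W : Matrix (Fin (d + d)) (Fin d) ℂ :=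
      ((Real.sqrt (1 - t) : ℝ) : ℂ) • J1 d d + ((Real.sqrt t : ℝ) : ℂ) • J2 d d with hWdef
    have ha2 : ((Real.sqrt (1 - t) : ℝ) : ℂ) * ((Real.sqrt (1 - t) : ℝ) : ℂ)
        = ((1 - t : ℝ) : ℂ) := by
      rw [← Complex.ofReal_mul, Real.mul_self_sqrt (by linarith)]
    have hb2 : ((Real.sqrt t : ℝ) : ℂ) * ((Real.sqrt t : ℝ) : ℂ) = ((t : ℝ) : ℂ) := by
      rw [← Complex.ofReal_mul, Real.mul_self_sqrt ht0]
    have hWt : Wᴴ = ((Real.sqrt (1 - t) : ℝ) : ℂ) • (J1 d d)ᴴ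
        + ((Real.sqrt t : ℝ) : ℂ) • (J2 d d)ᴴ := by
      rw [hWdef, conjTranspose_add, conjTranspose_smul, conjTranspose_smul]
      simp [Complex.star_def, Complex.conj_ofReal]
    have hWcomp : ∀ (A : Mat d) (B : Mat d),
        Wᴴ * dsumM A B * W = ((1 - t : ℝ) : ℂ) • A + ((t : ℝ) : ℂ) • B := by
      intro A B
      rw [hWt, hWdef]
      rw [Matrix.add_mul, Matrix.smul_mul, Matrix.smul_mul, J1t_mul_dsumM, J2t_mul_dsumM,
        Matrix.mul_add, Matrix.add_mul, Matrix.add_mul]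
      simp only [Matrix.mul_smul, Matrix.smul_mul, smul_smul, Matrix.mul_assoc,
        J1tJ1, J1tJ2, J2tJ1, J2tJ2, Matrix.mul_one, Matrix.mul_zero, smul_zero,
        add_zero, zero_add]
      rw [ha2, hb2]
    have hWW : Wᴴ * W = 1 := by
      have h1 := hWcomp 1 1
      rw [dsumM_one, Matrix.mul_one] at h1
      rw [h1, ← add_smul]
      have : ((1 - t : ℝ) : ℂ) + ((t : ℝ) : ℂ) = 1 := by push_cast; ring
      rw [this, one_smul]
    have key := h d (d + d) W hWW (fun i => dsumM (X i) (Y i)) (hD.dsum d d X hX Y hY)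
    rw [hF.dsum d d X hX Y hY, hWcomp (F d X) (F d Y)] at key
    have hfun : (fun i => Wᴴ * dsumM (X i) (Y i) * W)
        = fun i => ((1 - t : ℝ) : ℂ) • X i + ((t : ℝ) : ℂ) • Y i := by
      funext i; exact hWcomp (X i) (Y i)
    rw [hfun] at key
    exact key
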